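/- arXiv:1709.02137 — 4 statements merged into one kernel-verified Lean document; each statement's English description precedes it below -/
import Mathlib

section
/- Let n ≥ 1 and let ξ₁, …, ξₙ be cyclically interchangeable random variables taking values in the set of integers {…, −3, −2, −1, 0, 1} (i.e. integer-valued with ξᵢ ≤ 1 almost surely). Let R(i) = ξ₁ + ⋯ + ξᵢ for 1 ≤ i ≤ n and R(0) = 0. Then for every integer k with 0 ≤ k ≤ n such that P(R(n) = k) > 0, the conditional probability P(R(i) > 0 for every 1 ≤ i ≤ n | R(n) = k) equals k/n. -/
open MeasureTheory ProbabilityTheory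

open scoped ENNReal

section Cycle
open Fin.NatCast
variable {n : ℕ} [NeZero n]

/-- Partial sums of the periodic extension of `x`. -/
def SS (x : Fin n → ℤ) (m : ℕ) : ℤ := ∑ j ∈ Finset.range m, x (j : Fin n)

lemma SS_succ (x : Fin n → ℤ) (m : ℕ) : SS x (m+1) = SS x m + x (m : Fin n) :=
  Finset.sum_range_succ _ m

lemma SS_n (x : Fin n → ℤ) : SS x n = ∑ i, x i := by
  rw [SS, ← Fin.sum_univ_eq_sum_range (fun j => x ((j : ℕ) : Fin n)) n]
  simp [Fin.cast_val_eq_self]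

lemma SS_period (x : Fin n → ℤ) {C : ℤ} (hsum : ∑ i, x i = C) (m : ℕ) :
    SS x (m + n) = SS x m + C := by
  induction m with
  | zero => simpa [SS] using (SS_n x).trans hsum
  | succ m ih =>
      have h1 : m + 1 + n = (m + n) + 1 := by ring
      rw [h1, SS_succ, ih, SS_succ]
      have h2 : ((m + n : ℕ) : Fin n) = ((m : ℕ) : Fin n) := by
        push_cast
        simp
      rw [h2]; ring

lemma SS_add_mul (x : Fin n → ℤ) {C : ℤ} (hsum : ∑ i, x i = C) (m t : ℕ) :
    SS x (m + t * n) = SS x m + (t : ℤ) * C := by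
  induction t with
  | zero => simp
  | succ t ih =>
      have h1 : m + (t+1) * n = (m + t * n) + n := by ring
      rw [h1, SS_period x hsum, ih]
      push_cast; ring

/-- `m` is a strict future minimum of the walk. -/
def FutMin (x : Fin n → ℤ) (m : ℕ) : Prop := ∀ j, m < j → SS x m < SS x j

lemma futMin_add (x : Fin n → ℤ) {C : ℤ} (hsum : ∑ i, x i = C) {m : ℕ}
    (h : FutMin x m) : FutMin x (m + n) := by
  intro j hj
  have h1 : SS x j = SS x (j - n) + C := by
    have := SS_period x hsum (j - n)
    rwa [Nat.sub_add_cancel (by omega)] at this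
  have h2 : SS x m < SS x (j - n) := h _ (by omega)
  rw [SS_period x hsum m]
  omega

lemma futMin_sub (x : Fin n → ℤ) {C : ℤ} (hsum : ∑ i, x i = C) {m : ℕ}
    (hm : n ≤ m) (h : FutMin x m) : FutMin x (m - n) := by
  intro j hj
  have h1 : SS x m = SS x (m - n) + C := by
    have := SS_period x hsum (m - n)
    rwa [Nat.sub_add_cancel hm] at this
  have h2 : SS x m < SS x (j + n) := h _ (by omega)
  rw [SS_period x hsum j] at h2
  omega

lemma futMin_add_mul (x : Fin n → ℤ) {C : ℤ} (hsum : ∑ i, x i = C) {m : ℕ}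
    (h : FutMin x m) (t : ℕ) : FutMin x (m + t * n) := by
  induction t with
  | zero => simpa using h
  | succ t ih =>
      have h1 : m + (t+1) * n = (m + t * n) + n := by ring
      rw [h1]
      exact futMin_add x hsum ih
open scoped Classical in
lemma cycle_count_futMin (x : Fin n → ℤ) (hx : ∀ i, x i ≤ 1) (k : ℕ)
    (hsum : ∑ i, x i = (k : ℤ)) :
    ((Finset.range n).filter (fun r => FutMin x r)).card = k := by
  classical
  have hn : 0 < n := Nat.pos_of_ne_zero (NeZero.ne n)
  rcases Nat.eq_zero_or_pos k with hk0 | hkpos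
  · subst hk0
    rw [Finset.card_eq_zero, Finset.filter_eq_empty_iff]
    intro m _ hF
    have := hF (m + n) (by omega)
    rw [SS_period x hsum m] at this
    simp at this
  -- k ≥ 1
  set C : ℤ := (k : ℤ) with hC
  have hC1 : (1 : ℤ) ≤ C := by rw [hC]; omega
  -- lower bound of walk
  obtain ⟨a, ha, hamin⟩ := Finset.exists_min_image (Finset.range n) (SS x)
    ⟨0, Finset.mem_range.2 hn⟩
  set c : ℤ := SS x a with hc
  have hlb : ∀ m, c ≤ SS x m := by
    intro m
    have h1 : SS x m = SS x (m % n) + ((m / n : ℕ) : ℤ) * C := by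
      conv_lhs => rw [← Nat.mod_add_div' m n]
      exact SS_add_mul x hsum _ _
    have h2 : c ≤ SS x (m % n) := hamin _ (Finset.mem_range.2 (Nat.mod_lt _ hn))
    nlinarith [Int.natCast_nonneg (m / n)]
  have hlb' : ∀ m, n ≤ m → c < SS x m := by
    intro m hm
    have h1 : SS x m = SS x (m % n) + ((m / n : ℕ) : ℤ) * C := by
      conv_lhs => rw [← Nat.mod_add_div' m n]
      exact SS_add_mul x hsum _ _
    have h2 : c ≤ SS x (m % n) := hamin _ (Finset.mem_range.2 (Nat.mod_lt _ hn))
    have h3 : 1 ≤ m / n := Nat.one_le_div_iff hn |>.2 hm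
    have h4 : (1 : ℤ) ≤ ((m / n : ℕ) : ℤ) := by exact_mod_cast h3
    nlinarith
  -- last argmin
  set G : Finset ℕ := (Finset.range n).filter (fun m => SS x m = c) with hG
  have hGne : G.Nonempty := ⟨a, by simp [hG, ha, hc]⟩
  set m₀ : ℕ := G.max' hGne with hm₀
  have hm₀G : m₀ ∈ G := G.max'_mem hGne
  have hm₀n : m₀ < n := Finset.mem_range.1 (Finset.mem_filter.1 hm₀G).1
  have hm₀c : SS x m₀ = c := (Finset.mem_filter.1 hm₀G).2
  have hm₀F : FutMin x m₀ := by
    intro j hj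
    rw [hm₀c]
    rcases lt_or_ge j n with hjn | hjn
    · rcases lt_or_eq_of_le (hlb j) with h | h
      · exact h
      · exact absurd (G.le_max' j (by simp [hG, hjn, h.symm])) (by omega)
    · exact hlb' j hjn
  have hbelow : ∀ m, FutMin x m → m₀ ≤ m := by
    intro m hF
    by_contra hlt
    have := hF m₀ (by omega)
    rw [hm₀c] at this
    exact absurd (hlb m) (by omega)
  -- window equality
  have hwin : (Finset.range n).filter (fun r => FutMin x r)
      = (Finset.Ico m₀ (m₀ + n)).filter (fun r => FutMin x r) := by
    ext m
    simp only [Finset.mem_filter, Finset.mem_range, Finset.mem_Ico]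
    constructor
    · rintro ⟨hmn, hF⟩
      exact ⟨⟨hbelow m hF, by omega⟩, hF⟩
    · rintro ⟨⟨h1, h2⟩, hF⟩
      refine ⟨?_, hF⟩
      by_contra hge
      push_neg at hge
      have hF' : FutMin x (m - n) := futMin_sub x hsum hge hF
      have := hbelow _ hF'
      omega
  rw [hwin]
  -- bijection with an interval of values
  have hcard : (Finset.Ico c (c + C)).card = k := by
    rw [Int.card_Ico]
    simp [hC]
  rw [← hcard]
  apply Finset.card_bij (fun m _ => SS x m)
  · -- maps into
    intro m hm
    simp only [Finset.mem_filter, Finset.mem_Ico] at hm ⊢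
    obtain ⟨⟨h1, h2⟩, hF⟩ := hm
    constructor
    · rcases lt_or_eq_of_le h1 with h | h
      · rw [← hm₀c]; exact le_of_lt (hm₀F m h)
      · rw [← hm₀c, h]
    · have : SS x (m₀ + n) = c + C := by rw [SS_period x hsum, hm₀c]
      rw [← this]
      exact hF _ h2
  · -- injective
    intro m hm m' hm' heq
    simp only [Finset.mem_filter, Finset.mem_Ico] at hm hm'
    by_contra hne
    rcases Nat.lt_or_ge m m' with h | h
    · exact absurd heq (ne_of_lt (hm.2 m' h))
    · have h' : m' < m := by omega
      exact absurd heq.symm (ne_of_lt (hm'.2 m h'))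
  · -- surjective
    intro v hv
    simp only [Finset.mem_Ico] at hv
    set Bd : ℕ := m₀ + k * n with hBd
    have hbig : ∀ m, Bd < m → v < SS x m := by
      intro m hm
      have hFB : FutMin x Bd := futMin_add_mul x hsum hm₀F k
      have h1 : SS x Bd = c + (k : ℤ) * C := by
        rw [hBd, SS_add_mul x hsum, hm₀c]
      have h2 := hFB m hm
      have h3 : C ≤ (k : ℤ) * C := by nlinarith
      omega
    set g : ℕ := Nat.findGreatest (fun m => SS x m ≤ v) Bd with hg
    have hm₀Bd : m₀ ≤ Bd := by
      have : 1 * n ≤ k * n := Nat.mul_le_mul_right n hkpos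
      omega
    have hPm₀ : SS x m₀ ≤ v := by rw [hm₀c]; exact hv.1
    have hPg : SS x g ≤ v := by
      rw [hg]
      exact Nat.findGreatest_spec (P := fun m => SS x m ≤ v) hm₀Bd hPm₀
    have hgge : m₀ ≤ g := by
      rw [hg]
      exact Nat.le_findGreatest hm₀Bd hPm₀
    have hgt : ∀ j, g < j → v < SS x j := by
      intro j hj
      rcases le_or_gt j Bd with hle | hlt
      · have := Nat.findGreatest_is_greatest (n := Bd) (P := fun m => SS x m ≤ v)
          (by rw [hg] at hj; exact hj) hle
        simp only [not_le] at this
        exact this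
      · exact hbig j hlt
    have hSg : SS x g = v := by
      have h1 : v < SS x (g + 1) := hgt _ (Nat.lt_succ_self g)
      have h2 : SS x (g + 1) ≤ SS x g + 1 := by
        rw [SS_succ]
        have := hx ((g : ℕ) : Fin n)
        omega
      omega
    have hFg : FutMin x g := by
      intro j hj
      rw [hSg]
      exact hgt j hj
    have hglt : g < m₀ + n := by
      by_contra hge
      push_neg at hge
      have h1 : SS x (m₀ + n) = c + C := by rw [SS_period x hsum, hm₀c]
      rcases lt_or_eq_of_le hge with h | h
      · have h2 := (futMin_add x hsum hm₀F) g h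
        rw [h1, hSg] at h2
        omega
      · rw [h, hSg] at h1
        omega
    exact ⟨g, by simp only [Finset.mem_filter, Finset.mem_Ico]; exact ⟨⟨hgge, hglt⟩, hFg⟩, hSg⟩
lemma rot_sum (x : Fin n → ℤ) (r : Fin n) (i : ℕ) (hi : i ≤ n) :
    ∑ j : Fin n, (if (j : ℕ) < i then x (j + r) else 0)
      = SS x ((r : ℕ) + i) - SS x (r : ℕ) := by
  have h1 : ∑ j : Fin n, (if (j : ℕ) < i then x (j + r) else 0)
      = ∑ j ∈ Finset.range n, (if j < i then x ((j : ℕ) + r) else 0) := by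
    rw [← Fin.sum_univ_eq_sum_range (fun j => if j < i then x ((j : ℕ) + r) else 0) n]
    apply Finset.sum_congr rfl
    intro j _
    simp [Fin.cast_val_eq_self]
  have h2 : ∑ j ∈ Finset.range n, (if j < i then x ((j : ℕ) + r) else 0)
      = ∑ j ∈ Finset.range i, x ((j : ℕ) + r) := by
    rw [Finset.sum_ite, Finset.sum_const_zero, add_zero]
    apply Finset.sum_congr ?_ (fun _ _ => rfl)
    ext j
    simp only [Finset.mem_filter, Finset.mem_range]
    omega
  have h3 : ∀ m : ℕ, ∑ j ∈ Finset.range m, x ((j : ℕ) + r)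
      = SS x ((r : ℕ) + m) - SS x (r : ℕ) := by
    intro m
    induction m with
    | zero => simp
    | succ m ih =>
        rw [Finset.sum_range_succ, ih]
        have h4 : ((r : ℕ) + m : ℕ) = (r : ℕ) + m := rfl
        rw [show (r : ℕ) + (m + 1) = ((r : ℕ) + m) + 1 from rfl, SS_succ]
        have h5 : (((r : ℕ) + m : ℕ) : Fin n) = ((m : ℕ) : Fin n) + r := by
          push_cast
          exact add_comm _ _
        rw [h5]
        ring
  rw [h1, h2, h3]

open scoped Classical in
lemma good_iff_futMin (x : Fin n → ℤ) {k : ℕ} (hsum : ∑ i, x i = (k : ℤ)) (r : Fin n) :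
    (∀ i : ℕ, 1 ≤ i → i ≤ n → 0 < ∑ j : Fin n, (if (j : ℕ) < i then x (j + r) else 0))
      ↔ FutMin x (r : ℕ) := by
  constructor
  · intro h j
    induction j using Nat.strong_induction_on with
    | _ j ih =>
      intro hj
      rcases le_or_gt j ((r : ℕ) + n) with hle | hlt
      · have := h (j - (r : ℕ)) (by omega) (by omega)
        rw [rot_sum x r _ (by omega)] at this
        rw [show (r : ℕ) + (j - (r : ℕ)) = j from by omega] at this
        omega
      · have h1 : SS x j = SS x (j - n) + (k : ℤ) := by
          have := SS_period x hsum (j - n)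
          rwa [Nat.sub_add_cancel (by omega)] at this
        have h2 := ih (j - n) (by omega) (by omega)
        have h3 : (0 : ℤ) ≤ (k : ℤ) := Int.natCast_nonneg k
        omega
  · intro h i h1 h2
    rw [rot_sum x r i h2]
    have := h ((r : ℕ) + i) (by omega)
    omega

open scoped Classical in
lemma cycle_count_main (x : Fin n → ℤ) (hx : ∀ i, x i ≤ 1) (k : ℕ)
    (hsum : ∑ i, x i = (k : ℤ)) :
    (Finset.univ.filter (fun r : Fin n =>
        ∀ i : ℕ, 1 ≤ i → i ≤ n → 0 < ∑ j : Fin n, (if (j : ℕ) < i then x (j + r) else 0))).card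
      = k := by
  rw [← cycle_count_futMin x hx k hsum]
  refine Finset.card_bij (fun r _ => (r : ℕ)) ?_ ?_ ?_
  · intro r hr
    simp only [Finset.mem_filter, Finset.mem_univ, true_and] at hr
    simp only [Finset.mem_filter, Finset.mem_range]
    exact ⟨r.isLt, (good_iff_futMin x hsum r).1 hr⟩
  · intro r _ r' _ h
    exact Fin.val_injective h
  · intro m hm
    simp only [Finset.mem_filter, Finset.mem_range] at hm
    refine ⟨⟨m, hm.1⟩, ?_, rfl⟩
    simp only [Finset.mem_filter, Finset.mem_univ, true_and]
    exact (good_iff_futMin x hsum ⟨m, hm.1⟩).2 hm.2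

end Cycle

/-- Ballot-type theorem (Dwass/Takács): for a walk with cyclically interchangeable
increments taking values in `{…, -2, -1, 0, 1}`, conditionally on `R n = k`
(with `0 ≤ k ≤ n`), the probability that the walk stays strictly positive up to
time `n` is `k / n`. -/
theorem ballot_cyclically_interchangeable
    {Ω : Type*} [MeasurableSpace Ω] (μ : Measure Ω) [IsProbabilityMeasure μ]
    (n : ℕ) (hn : 1 ≤ n) (ξ : Fin n → Ω → ℤ)
    (hmeas : ∀ i, Measurable (ξ i))
    (hbound : ∀ i, ∀ᵐ ω ∂μ, ξ i ω ≤ 1)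
    (hcyc : ∀ r : Fin n,
      Measure.map (fun ω => fun i : Fin n => ξ (i + r) ω) μ
        = Measure.map (fun ω => fun i : Fin n => ξ i ω) μ)
    (R : ℕ → Ω → ℤ)
    (hR : ∀ i ω, R i ω = ∑ j : Fin n, if (j : ℕ) < i then ξ j ω else 0)
    (k : ℕ) (hk : k ≤ n)
    (hpos : μ {ω | R n ω = (k : ℤ)} ≠ 0) :
    μ[{ω | ∀ i : ℕ, 1 ≤ i → i ≤ n → 0 < R i ω} | {ω | R n ω = (k : ℤ)}]
      = (k : ENNReal) / (n : ENNReal) := by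
  classical
  haveI : NeZero n := ⟨by omega⟩
  -- the shifted maps
  set Φ : Fin n → Ω → (Fin n → ℤ) := fun r ω => fun i : Fin n => ξ (i + r) ω with hΦ
  have hΦmeas : ∀ r, Measurable (Φ r) := fun r => measurable_pi_lambda _ (fun i => hmeas _)
  have hΦ0 : Φ 0 = fun ω => fun i : Fin n => ξ i ω := by
    funext ω i; simp [hΦ]
  -- the target set
  set T : Set (Fin n → ℤ) := {y | (∀ i : ℕ, 1 ≤ i → i ≤ n →
      0 < ∑ j : Fin n, (if (j : ℕ) < i then y j else 0)) ∧ ∑ j : Fin n, y j = (k : ℤ)}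
    with hT
  have hsummeas : ∀ i : ℕ,
      Measurable (fun y : Fin n → ℤ => ∑ j : Fin n, (if (j : ℕ) < i then y j else 0)) := by
    intro i
    apply Finset.measurable_sum
    intro j _
    by_cases h : (j : ℕ) < i
    · simpa [h] using measurable_pi_apply j
    · simp only [h, if_false]
      exact measurable_const
  have htotmeas : Measurable (fun y : Fin n → ℤ => ∑ j : Fin n, y j) :=
    Finset.measurable_sum _ (fun j _ => measurable_pi_apply j)
  have hTmeas : MeasurableSet T := by
    have hTe : T = (⋂ i : ℕ, ⋂ (_ : 1 ≤ i), ⋂ (_ : i ≤ n),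
        {y : Fin n → ℤ | 0 < ∑ j : Fin n, (if (j : ℕ) < i then y j else 0)})
        ∩ {y : Fin n → ℤ | ∑ j : Fin n, y j = (k : ℤ)} := by
      ext y
      simp [hT, Set.mem_iInter]
    rw [hTe]
    refine MeasurableSet.inter ?_ (htotmeas (measurableSet_singleton _))
    exact MeasurableSet.iInter fun i => MeasurableSet.iInter fun _ =>
      MeasurableSet.iInter fun _ => (hsummeas i) measurableSet_Ioi
  -- the event B
  set B0 : Set Ω := {ω | ∑ j : Fin n, ξ j ω = (k : ℤ)} with hB0
  have hB0meas : MeasurableSet B0 := by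
    have : Measurable (fun ω => ∑ j : Fin n, ξ j ω) :=
      Finset.measurable_sum _ (fun j _ => hmeas j)
    exact this (measurableSet_singleton _)
  -- preimage identification
  have hpre : ∀ r : Fin n, Φ r ⁻¹' T
      = {ω | ∀ i : ℕ, 1 ≤ i → i ≤ n →
          0 < ∑ j : Fin n, (if (j : ℕ) < i then ξ (j + r) ω else 0)} ∩ B0 := by
    intro r
    ext ω
    have hre : ∑ j : Fin n, ξ (j + r) ω = ∑ j : Fin n, ξ j ω :=
      Fintype.sum_equiv (Equiv.addRight r) _ _ (fun j => rfl)
    simp only [hΦ, hT, hB0, Set.mem_preimage, Set.mem_setOf_eq, Set.mem_inter_iff, hre]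
  -- equality of measures of the shifted events
  have hmapeq : ∀ r : Fin n, μ (Φ r ⁻¹' T) = μ (Φ 0 ⁻¹' T) := by
    intro r
    rw [← MeasureTheory.Measure.map_apply (hΦmeas r) hTmeas,
      ← MeasureTheory.Measure.map_apply (hΦmeas 0) hTmeas, hΦ0]
    congr 1
    exact hcyc r
  -- the key counting identity
  have hkey : ∑ r : Fin n, μ (Φ r ⁻¹' T) = (k : ℝ≥0∞) * μ B0 := by
    have h1 : ∀ r : Fin n, μ (Φ r ⁻¹' T)
        = ∫⁻ ω, (Φ r ⁻¹' T).indicator (fun _ => (1 : ℝ≥0∞)) ω ∂μ := by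
      intro r
      rw [MeasureTheory.lintegral_indicator_const ((hΦmeas r) hTmeas), one_mul]
    rw [Finset.sum_congr rfl (fun r _ => h1 r),
      ← MeasureTheory.lintegral_finset_sum _
        (fun r _ => (measurable_const.indicator ((hΦmeas r) hTmeas)))]
    have hae : ∀ᵐ ω ∂μ, ∀ i, ξ i ω ≤ 1 := (MeasureTheory.ae_all_iff).2 hbound
    have haeeq : ∀ᵐ ω ∂μ, ∑ r : Fin n, (Φ r ⁻¹' T).indicator (fun _ => (1 : ℝ≥0∞)) ω
        = B0.indicator (fun _ => (k : ℝ≥0∞)) ω := by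
      filter_upwards [hae] with ω hω
      by_cases hωB : ω ∈ B0
      · have hsum : ∑ j : Fin n, ξ j ω = (k : ℤ) := hωB
        have hmem : ∀ r : Fin n, (ω ∈ Φ r ⁻¹' T) ↔ (∀ i : ℕ, 1 ≤ i → i ≤ n →
            0 < ∑ j : Fin n, (if (j : ℕ) < i then ξ (j + r) ω else 0)) := by
          intro r
          rw [hpre r]
          simp [hωB]
        have hcount := cycle_count_main (fun j => ξ j ω) hω k hsum
        calc ∑ r : Fin n, (Φ r ⁻¹' T).indicator (fun _ => (1 : ℝ≥0∞)) ω
            = ∑ r : Fin n, (if (∀ i : ℕ, 1 ≤ i → i ≤ n →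
                0 < ∑ j : Fin n, (if (j : ℕ) < i then ξ (j + r) ω else 0))
                then (1 : ℝ≥0∞) else 0) := by
              refine Finset.sum_congr rfl (fun r _ => ?_)
              rw [Set.indicator_apply]
              congr 1
              simp only [hmem r]
          _ = ((Finset.univ.filter (fun r : Fin n => ∀ i : ℕ, 1 ≤ i → i ≤ n →
                0 < ∑ j : Fin n, (if (j : ℕ) < i then ξ (j + r) ω else 0))).card : ℝ≥0∞) := by
              rw [Finset.sum_boole]
          _ = (k : ℝ≥0∞) := by rw [hcount]
          _ = B0.indicator (fun _ => (k : ℝ≥0∞)) ω := by rw [Set.indicator_of_mem hωB]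
      · have hnot : ∀ r : Fin n, ω ∉ Φ r ⁻¹' T := by
          intro r
          rw [hpre r]
          exact fun h => hωB h.2
        rw [Set.indicator_of_notMem hωB]
        exact Finset.sum_eq_zero (fun r _ => Set.indicator_of_notMem (hnot r) _)
    rw [MeasureTheory.lintegral_congr_ae haeeq,
      MeasureTheory.lintegral_indicator_const hB0meas]
  -- all summands are equal
  have hn_mul : (n : ℝ≥0∞) * μ (Φ 0 ⁻¹' T) = (k : ℝ≥0∞) * μ B0 := by
    rw [← hkey, Finset.sum_congr rfl (fun r _ => hmapeq r), Finset.sum_const,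
      Finset.card_univ, Fintype.card_fin, nsmul_eq_mul]
  -- identify the events in the statement
  have hBeq : {ω | R n ω = (k : ℤ)} = B0 := by
    ext ω
    simp only [Set.mem_setOf_eq, hB0, hR n ω]
    have : ∑ j : Fin n, (if (j : ℕ) < n then ξ j ω else 0) = ∑ j : Fin n, ξ j ω :=
      Finset.sum_congr rfl (fun j _ => by simp [j.isLt])
    rw [this]
  have hABeq : {ω | R n ω = (k : ℤ)} ∩ {ω | ∀ i : ℕ, 1 ≤ i → i ≤ n → 0 < R i ω}
      = Φ 0 ⁻¹' T := by
    rw [hpre 0, hBeq]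
    ext ω
    simp only [Set.mem_inter_iff, Set.mem_setOf_eq]
    constructor
    · rintro ⟨h1, h2⟩
      refine ⟨fun i hi1 hi2 => ?_, h1⟩
      have := h2 i hi1 hi2
      rw [hR i ω] at this
      simpa [add_zero] using this
    · rintro ⟨h1, h2⟩
      refine ⟨h2, fun i hi1 hi2 => ?_⟩
      rw [hR i ω]
      simpa [add_zero] using h1 i hi1 hi2
  -- final computation
  have hBmeas : MeasurableSet {ω | R n ω = (k : ℤ)} := by rw [hBeq]; exact hB0meas
  rw [ProbabilityTheory.cond_apply hBmeas μ, hABeq]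
  have hμB : μ {ω | R n ω = (k : ℤ)} = μ B0 := by rw [hBeq]
  rw [hμB]
  have hb0 : μ B0 ≠ 0 := by rwa [hμB] at hpos
  have hbtop : μ B0 ≠ ⊤ := measure_ne_top μ _
  have hn0 : (n : ℝ≥0∞) ≠ 0 := by
    simp only [ne_eq, Nat.cast_eq_zero]
    omega
  have hntop : (n : ℝ≥0∞) ≠ ⊤ := ENNReal.natCast_ne_top n
  have hm : μ (Φ 0 ⁻¹' T) = (k : ℝ≥0∞) * μ B0 / (n : ℝ≥0∞) := by
    rw [ENNReal.eq_div_iff hn0 hntop, hn_mul]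
  rw [hm]
  rw [div_eq_mul_inv, div_eq_mul_inv]
  calc (μ B0)⁻¹ * ((k : ℝ≥0∞) * μ B0 * (n : ℝ≥0∞)⁻¹)
      = (k : ℝ≥0∞) * (n : ℝ≥0∞)⁻¹ * ((μ B0)⁻¹ * μ B0) := by ring
    _ = (k : ℝ≥0∞) * (n : ℝ≥0∞)⁻¹ := by
        rw [ENNReal.inv_mul_cancel hb0 hbtop, mul_one]
end

section
/- Let t ≥ 1 be a natural number and let φ : ℕ → ℕ be a nondecreasing function with φ(0) = 0 satisfying φ(t + u) = φ(t) + φ(u) for all u ∈ ℕ. For u ∈ ℕ define δ(u) = 1 if v − φ(v) > u − φ(u) for every v > u, and δ(u) = 0 otherwise. Then the sum δ(1) + δ(2) + ⋯ + δ(t) equals t − φ(t) if 0 ≤ φ(t) ≤ t, and equals 0 if φ(t) ≥ t. -/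
open Classical in

/-- Takács' deterministic lemma: for a nondecreasing additive-type function `φ`
with `φ 0 = 0` and `φ (t + u) = φ t + φ u`, the number of indices
`u ∈ {1, …, t}` such that `v - φ v > u - φ u` for every `v > u` equals
`t - φ t` if `φ t ≤ t` and `0` if `φ t ≥ t`. -/
theorem takacs_deterministic_lemma
    (t : ℕ) (ht : 1 ≤ t) (φ : ℕ → ℕ) (hmono : Monotone φ) (h0 : φ 0 = 0)
    (hadd : ∀ u : ℕ, φ (t + u) = φ t + φ u)
    (δ : ℕ → ℕ)
    (hδ : ∀ u : ℕ, δ u =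
      if ∀ v : ℕ, u < v → (u : ℤ) - (φ u : ℤ) < (v : ℤ) - (φ v : ℤ) then 1 else 0) :
    (φ t ≤ t → (∑ u ∈ Finset.Icc 1 t, δ u) = t - φ t) ∧
    (t ≤ φ t → (∑ u ∈ Finset.Icc 1 t, δ u) = 0) := by
  set f : ℕ → ℤ := fun u => (u : ℤ) - (φ u : ℤ) with hfdef
  have hf : ∀ u, f u = (u : ℤ) - (φ u : ℤ) := fun u => rfl
  have hstep : ∀ u : ℕ, f (u + t) = f u + ((t : ℤ) - (φ t : ℤ)) := by
    intro u
    have h1 : φ (u + t) = φ t + φ u := by rw [Nat.add_comm]; exact hadd u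
    rw [hf, hf, h1]
    push_cast
    ring
  constructor
  · intro h1
    have hd0 : (0 : ℤ) ≤ (t : ℤ) - (φ t : ℤ) := by
      have : (φ t : ℤ) ≤ (t : ℤ) := by exact_mod_cast h1
      linarith
    have hne : ∀ u : ℕ, (Finset.Ico u (u + t)).Nonempty :=
      fun u => ⟨u, by simp [Finset.mem_Ico]; omega⟩
    set M : ℕ → ℤ := fun u => (Finset.Ico u (u + t)).inf' (hne u) f with hM
    have hA : ∀ v u : ℕ, u ≤ v → M u ≤ f v := by
      intro v
      induction v using Nat.strong_induction_on with
      | _ v ih =>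
        intro u huv
        by_cases hv : v < u + t
        · exact Finset.inf'_le f (by simp [Finset.mem_Ico]; omega)
        · push_neg at hv
          have h1' : v - t + t = v := by omega
          have h2' := hstep (v - t)
          rw [h1'] at h2'
          have hle : M u ≤ f (v - t) := ih (v - t) (by omega) u (by omega)
          linarith
    have hD : ∀ u : ℕ, M (u + 1) = M u + (δ u : ℤ) := by
      intro u
      have hMu : M u = min (f u) (M (u + 1)) := by
        apply le_antisymm
        · refine le_min (Finset.inf'_le f (by simp [Finset.mem_Ico]; omega)) ?_
          exact Finset.le_inf' _ _ fun v hv =>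
            hA v u (by simp [Finset.mem_Ico] at hv; omega)
        · obtain ⟨w, hw, hMw⟩ := Finset.exists_mem_eq_inf' (hne u) f
          simp [Finset.mem_Ico] at hw
          have hMw' : M u = f w := hMw
          rcases eq_or_lt_of_le hw.1 with h | h
          · rw [hMw', ← h]; exact min_le_left _ _
          · refine le_trans (min_le_right _ _) ?_
            rw [hMw']
            exact Finset.inf'_le f (by simp [Finset.mem_Ico]; omega)
      rw [hδ u]
      by_cases hP : ∀ v : ℕ, u < v → (u : ℤ) - (φ u : ℤ) < (v : ℤ) - (φ v : ℤ)
      · rw [if_pos hP]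
        have h1' : f u + 1 ≤ M (u + 1) := by
          apply Finset.le_inf'
          intro v hv
          simp [Finset.mem_Ico] at hv
          have := hP v (by omega)
          show (u : ℤ) - (φ u : ℤ) + 1 ≤ (v : ℤ) - (φ v : ℤ)
          omega
        have h2' : M (u + 1) ≤ f u + 1 := by
          refine le_trans
            (Finset.inf'_le f (show u + 1 ∈ _ by simp [Finset.mem_Ico]; omega)) ?_
          have := hmono (show u ≤ u + 1 by omega)
          show (u + 1 : ℤ) - (φ (u + 1) : ℤ) ≤ (u : ℤ) - (φ u : ℤ) + 1
          push_cast
          omega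
        have h3' : M (u + 1) = f u + 1 := le_antisymm h2' h1'
        rw [hMu, h3', min_eq_left (by linarith)]
        push_cast
        ring
      · rw [if_neg hP]
        push_neg at hP
        obtain ⟨v, hv, hfv⟩ := hP
        have h4' : M (u + 1) ≤ f u := by
          refine le_trans (hA v (u + 1) (by omega)) ?_
          rw [hf]
          exact hfv
        rw [hMu, min_eq_right h4']
        simp
    have htel : (∑ u ∈ Finset.Icc 1 t, (δ u : ℤ)) = M (t + 1) - M 1 := by
      have hc : ∀ u ∈ Finset.Icc 1 t, (δ u : ℤ) = M (u + 1) - M u := by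
        intro u _
        rw [hD u]; ring
      rw [Finset.sum_congr rfl hc,
        show Finset.Icc 1 t = Finset.Ico 1 (t + 1) by rw [Finset.Ico_add_one_right_eq_Icc],
        Finset.sum_Ico_eq_sub _ (by omega : 1 ≤ t + 1),
        Finset.sum_range_sub (fun u => M u)]
      simp [Finset.sum_range_sub (fun u => M u)]
    have hF : M (t + 1) = M 1 + ((t : ℤ) - (φ t : ℤ)) := by
      apply le_antisymm
      · have hle : M (t + 1) - ((t : ℤ) - (φ t : ℤ)) ≤ M 1 := by
          apply Finset.le_inf'
          intro v hv
          simp [Finset.mem_Ico] at hv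
          have hmem : v + t ∈ Finset.Ico (t + 1) (t + 1 + t) := by
            simp [Finset.mem_Ico]; omega
          have hil : M (t + 1) ≤ f (v + t) := Finset.inf'_le f hmem
          have hs := hstep v
          have : M (t + 1) ≤ f v + ((t : ℤ) - (φ t : ℤ)) := by
            rw [← hs]; exact hil
          linarith
        linarith
      · obtain ⟨w, hw, hMw⟩ := Finset.exists_mem_eq_inf' (hne (t + 1)) f
        simp [Finset.mem_Ico] at hw
        have h1' : w - t + t = w := by omega
        have h2' := hstep (w - t)
        rw [h1'] at h2'
        have h3' : M 1 ≤ f (w - t) :=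
          Finset.inf'_le f (by simp [Finset.mem_Ico]; omega)
        have hMw' : M (t + 1) = f w := hMw
        rw [hMw']
        linarith
    have hsum : ((∑ u ∈ Finset.Icc 1 t, δ u : ℕ) : ℤ) = (t : ℤ) - (φ t : ℤ) := by
      push_cast
      rw [htel, hF]
      ring
    omega
  · intro h2
    apply Finset.sum_eq_zero
    intro u _
    rw [hδ u, if_neg]
    push_neg
    refine ⟨u + t, by omega, ?_⟩
    have h1 : φ (u + t) = φ t + φ u := by rw [Nat.add_comm]; exact hadd u
    rw [h1]
    push_cast
    omega
end

section
/- (Kemperman's formula for cyclically interchangeable increments.) Let n ≥ 1 and let ξ₁, …, ξₙ be cyclically interchangeable integer-valued random variables with ξᵢ ≥ −1 almost surely. Let R(j) = ξ₁ + ⋯ + ξⱼ for 1 ≤ j ≤ n, R(0) = 0, and for an integer k ≥ 1 let T_{−k} = min{ j ≥ 1 : R(j) = −k } be the first time the walk reaches level −k. Then for every integer k with 1 ≤ k ≤ n such that P(R(n) = −k) > 0, one has n · P(T_{−k} = n | R(n) = −k) = k. -/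
open MeasureTheory ProbabilityTheory
open scoped ENNReal NNReal

section CycleLemma
open Finset

/-- Downward skip-free walks hit every level they cross. -/
lemma khit (T : ℕ → ℤ) (hskip : ∀ m, T m - 1 ≤ T (m + 1)) (a b : ℕ) (c : ℤ)
    (hab : a ≤ b) (ha : c ≤ T a) (hb : T b ≤ c) :
    ∃ i, a ≤ i ∧ i ≤ b ∧ T i = c := by
  have hex : ∃ j, T (a + j) ≤ c := ⟨b - a, by rwa [Nat.add_sub_cancel' hab]⟩
  classical
  refine ⟨a + Nat.find hex, Nat.le_add_right _ _, ?_, ?_⟩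
  · have : Nat.find hex ≤ b - a := Nat.find_min' hex (by rwa [Nat.add_sub_cancel' hab])
    omega
  · have hspec := Nat.find_spec hex
    rcases Nat.eq_zero_or_pos (Nat.find hex) with h0 | h0
    · rw [h0] at hspec ⊢
      simp only [Nat.add_zero] at hspec ⊢
      omega
    · have hmin := Nat.find_min hex (Nat.sub_lt h0 one_pos)
      push_neg at hmin
      have := hskip (a + (Nat.find hex - 1))
      have heq : a + (Nat.find hex - 1) + 1 = a + Nat.find hex := by omega
      rw [heq] at this
      omega

/-- The cycle lemma count: a skip-free-downward walk from `0` to `-k` has exactly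
`k` "good" rotation points in `[0, n)`. -/
lemma cycle_count (n k : ℕ) (hn : 1 ≤ n) (hk1 : 1 ≤ k) (T : ℕ → ℤ)
    (hT0 : T 0 = 0) (hTn : T n = -(k : ℤ)) (hskip : ∀ m, T m - 1 ≤ T (m + 1)) :
    (((range n).filter (fun r =>
        (∀ i < r, T r < T i) ∧ (∀ i, r ≤ i → i < n → T r - k < T i))).card : ℕ) = k := by
  classical
  obtain ⟨istar, histar, hmin⟩ := Finset.exists_min_image (range n) T ⟨0, mem_range.2 hn⟩
  rw [mem_range] at histar
  have hmin' : ∀ i < n, T istar ≤ T i := fun i hi => hmin i (mem_range.2 hi)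
  have hm0 : T istar ≤ 0 := hT0 ▸ hmin' 0 hn
  have hmk : T istar + k ≤ 1 := by
    have h1 : T istar ≤ T (n - 1) := hmin' (n - 1) (by omega)
    have h2 := hskip (n - 1)
    have : n - 1 + 1 = n := by omega
    rw [this, hTn] at h2
    omega
  have hcard : (Finset.Icc (T istar) (T istar + k - 1)).card = k := by
    rw [Int.card_Icc]
    omega
  rw [← hcard]
  apply Finset.card_bij (fun a _ => T a)
  · -- maps into Icc
    intro a ha
    rw [mem_filter, mem_range] at ha
    obtain ⟨han, h1, h2⟩ := ha
    rw [Finset.mem_Icc]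
    constructor
    · exact hmin' a han
    · rcases le_or_gt a istar with h | h
      · have := h2 istar h histar; omega
      · have := h1 istar h; have := hmin' a han; omega
  · -- injective
    intro a1 ha1 a2 ha2 heq
    rw [mem_filter, mem_range] at ha1 ha2
    rcases lt_trichotomy a1 a2 with h | h | h
    · have := ha2.2.1 a1 h; omega
    · exact h
    · have := ha1.2.1 a2 h; omega
  · -- surjective
    intro v hv
    rw [Finset.mem_Icc] at hv
    obtain ⟨i0, -, hi0b, hi0⟩ := khit T hskip 0 istar v (Nat.zero_le _)
      (by rw [hT0]; omega) (by omega)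
    have hex : ∃ i, T i = v := ⟨i0, hi0⟩
    refine ⟨Nat.find hex, ?_, Nat.find_spec hex⟩
    have hfind : Nat.find hex ≤ i0 := Nat.find_min' hex hi0
    rw [mem_filter, mem_range]
    refine ⟨by omega, ?_, ?_⟩
    · intro i hi
      by_contra hcon
      push_neg at hcon
      rw [Nat.find_spec hex] at hcon
      obtain ⟨i', -, hi'b, hi'⟩ := khit T hskip 0 i v (Nat.zero_le _) (by rw [hT0]; omega) hcon
      exact absurd (Nat.find_spec hex) (by
        have := Nat.find_min hex (show i' < Nat.find hex by omega)
        exact fun _ => this hi')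
    · intro i hri hin
      rw [Nat.find_spec hex]
      have := hmin' i hin
      omega

lemma key_count (n k : ℕ) (hn : 1 ≤ n) (hk1 : 1 ≤ k) (x : Fin n → ℤ)
    (hb : ∀ i, -1 ≤ x i) (hs : ∑ i, x i = -(k : ℤ)) :
    ((Finset.univ.filter (fun r : Fin n =>
        ∀ j : ℕ, 1 ≤ j → j < n → (∑ l : Fin n, if (l : ℕ) < j then x (l + r) else 0) ≠ -(k : ℤ))).card : ℕ) = k := by
  classical
  have hn0 : 0 < n := hn
  set y : ℕ → ℤ := fun m => x ⟨m % n, Nat.mod_lt m hn0⟩ with hy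
  set T : ℕ → ℤ := fun j => ∑ m ∈ Finset.range j, y m with hT
  have hT0 : T 0 = 0 := by simp [hT]
  have hTsucc : ∀ m, T (m + 1) = T m + y m := fun m => Finset.sum_range_succ y m
  have hTadd : ∀ a b, T (a + b) = T a + ∑ i ∈ Finset.range b, y (a + i) :=
    fun a b => Finset.sum_range_add y a b
  have hskip : ∀ m, T m - 1 ≤ T (m + 1) := by
    intro m
    have h1 := hTsucc m
    have h2 := hb ⟨m % n, Nat.mod_lt m hn0⟩
    have h3 : y m = x ⟨m % n, Nat.mod_lt m hn0⟩ := rfl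
    omega
  have hyx : ∀ i : Fin n, y (i : ℕ) = x i := by
    intro i
    simp only [hy]
    congr 1
    exact Fin.ext (Nat.mod_eq_of_lt i.isLt)
  have hTn : T n = -(k : ℤ) := by
    calc T n = ∑ i : Fin n, y (i : ℕ) := (Fin.sum_univ_eq_sum_range y n).symm
      _ = ∑ i, x i := Finset.sum_congr rfl fun i _ => hyx i
      _ = -(k : ℤ) := hs
  have hper : ∀ m, T (n + m) = T m - k := by
    intro m
    have h1 : ∀ i, y (n + i) = y i := by
      intro i; simp only [hy]; congr 1; exact Fin.ext (by simp [Nat.add_mod_left])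
    have h5 := hTadd n m
    have h6 : (∑ i ∈ Finset.range m, y (n + i)) = ∑ i ∈ Finset.range m, y i :=
      Finset.sum_congr rfl fun i _ => h1 i
    have h7 : (∑ i ∈ Finset.range m, y i) = T m := rfl
    rw [h5, h6, h7, hTn]
    ring
  -- partial sums of the rotated sequence
  have hL1 : ∀ (r : Fin n) (j : ℕ), j ≤ n →
      (∑ l : Fin n, if (l : ℕ) < j then x (l + r) else 0) = T ((r : ℕ) + j) - T r := by
    intro r j hj
    have step1 : (∑ l : Fin n, if (l : ℕ) < j then x (l + r) else 0)
        = ∑ m ∈ Finset.range n, (if m < j then y ((r : ℕ) + m) else 0) := by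
      rw [← Fin.sum_univ_eq_sum_range (fun m => if m < j then y ((r : ℕ) + m) else 0) n]
      refine Finset.sum_congr rfl fun l _ => ?_
      congr 1
      simp only [hy]
      congr 1
      exact Fin.ext (by simp [Fin.add_def, Nat.add_comm])
    rw [step1]
    have step2 : (∑ m ∈ Finset.range n, if m < j then y ((r : ℕ) + m) else 0)
        = ∑ m ∈ Finset.range j, y ((r : ℕ) + m) := by
      rw [← Finset.sum_subset (Finset.range_subset_range.2 hj) (fun m _ hm => by
        rw [Finset.mem_range] at hm; rw [if_neg (by omega)])]
      exact Finset.sum_congr rfl fun m hm => if_pos (Finset.mem_range.1 hm)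
    rw [step2]
    have h8 := hTadd (r : ℕ) j
    omega
  -- equivalence of the two good notions
  have hequiv : ∀ r : Fin n,
      (∀ j : ℕ, 1 ≤ j → j < n → (∑ l : Fin n, if (l : ℕ) < j then x (l + r) else 0) ≠ -(k : ℤ))
      ↔ ((∀ i < (r : ℕ), T r < T i) ∧ (∀ i, (r : ℕ) ≤ i → i < n → T (r : ℕ) - k < T i)) := by
    intro r
    constructor
    · intro hgs
      have hgs' : ∀ j : ℕ, 1 ≤ j → j < n → T ((r : ℕ) + j) ≠ T (r : ℕ) - k := by
        intro j h1 h2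
        have := hgs j h1 h2
        rw [hL1 r j (le_of_lt h2)] at this
        omega
      constructor
      · intro i hi
        by_contra hcon
        push_neg at hcon
        have hin : T (i + n) ≤ T (r : ℕ) - k := by rw [Nat.add_comm, hper]; omega
        obtain ⟨i', hi'1, hi'2, hi'3⟩ := khit T hskip (r : ℕ) (i + n) (T (r : ℕ) - k)
          (by have := r.isLt; omega) (by omega) hin
        have hj : i' - (r : ℕ) < n := by have := r.isLt; omega
        have hj1 : 1 ≤ i' - (r : ℕ) := by
          rcases Nat.eq_or_lt_of_le hi'1 with h | h
          · exfalso; rw [← h] at hi'3; omega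
          · omega
        exact hgs' (i' - (r : ℕ)) hj1 hj (by rw [Nat.add_sub_cancel' hi'1]; omega)
      · intro i hri hin
        by_contra hcon
        push_neg at hcon
        obtain ⟨i', hi'1, hi'2, hi'3⟩ := khit T hskip (r : ℕ) i (T (r : ℕ) - k)
          hri (by omega) hcon
        have hj : i' - (r : ℕ) < n := by omega
        have hj1 : 1 ≤ i' - (r : ℕ) := by
          rcases Nat.eq_or_lt_of_le hi'1 with h | h
          · exfalso; rw [← h] at hi'3; omega
          · omega
        exact hgs' (i' - (r : ℕ)) hj1 hj (by rw [Nat.add_sub_cancel' hi'1]; omega)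
    · rintro ⟨h1, h2⟩ j hj1 hjn
      rw [hL1 r j (le_of_lt hjn)]
      rcases lt_or_ge ((r : ℕ) + j) n with h | h
      · have := h2 ((r : ℕ) + j) (Nat.le_add_right _ _) h
        omega
      · have hlt : (r : ℕ) + j - n < (r : ℕ) := by have := r.isLt; omega
        have heq : T ((r : ℕ) + j) = T ((r : ℕ) + j - n) - k := by
          rw [← hper ((r : ℕ) + j - n)]
          congr 1
          omega
        have := h1 ((r : ℕ) + j - n) hlt
        omega
  -- transfer the count from Fin n to range n
  have hbij : ((Finset.univ.filter (fun r : Fin n =>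
        ∀ j : ℕ, 1 ≤ j → j < n → (∑ l : Fin n, if (l : ℕ) < j then x (l + r) else 0) ≠ -(k : ℤ))).card : ℕ)
      = ((range n).filter (fun r =>
        (∀ i < r, T r < T i) ∧ (∀ i, r ≤ i → i < n → T r - k < T i))).card := by
    apply Finset.card_bij (fun (a : Fin n) _ => (a : ℕ))
    · intro a ha
      rw [Finset.mem_filter] at ha
      rw [Finset.mem_filter, Finset.mem_range]
      exact ⟨a.isLt, (hequiv a).1 ha.2⟩
    · intro a1 _ a2 _ h
      exact Fin.ext h
    · intro b hb'
      rw [Finset.mem_filter, Finset.mem_range] at hb'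
      refine ⟨⟨b, hb'.1⟩, ?_, rfl⟩
      rw [Finset.mem_filter]
      exact ⟨Finset.mem_univ _, (hequiv ⟨b, hb'.1⟩).2 hb'.2⟩
  rw [hbij]
  exact cycle_count n k hn hk1 T hT0 hTn hskip

end CycleLemma

/-- Kemperman's formula for cyclically interchangeable increments: if the
increments are integer-valued, `≥ -1` a.s., and cyclically interchangeable,
then conditionally on `R n = -k` (with `1 ≤ k ≤ n`), the probability that the
first hitting time of level `-k` equals `n` is `k / n`. -/
theorem kemperman_cyclically_interchangeable
    {Ω : Type*} [MeasurableSpace Ω] (μ : Measure Ω) [IsProbabilityMeasure μ]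
    (n : ℕ) (hn : 1 ≤ n) (ξ : Fin n → Ω → ℤ)
    (hmeas : ∀ i, Measurable (ξ i))
    (hbound : ∀ i, ∀ᵐ ω ∂μ, -1 ≤ ξ i ω)
    (hcyc : ∀ r : Fin n,
      Measure.map (fun ω => fun i : Fin n => ξ (i + r) ω) μ
        = Measure.map (fun ω => fun i : Fin n => ξ i ω) μ)
    (R : ℕ → Ω → ℤ)
    (hR : ∀ j ω, R j ω = ∑ l : Fin n, if (l : ℕ) < j then ξ l ω else 0)
    (k : ℕ) (hk1 : 1 ≤ k) (hkn : k ≤ n)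
    (hpos : μ {ω | R n ω = -(k : ℤ)} ≠ 0) :
    (n : ENNReal) *
      μ[{ω | R n ω = -(k : ℤ) ∧ ∀ j : ℕ, 1 ≤ j → j < n → R j ω ≠ -(k : ℤ)} |
        {ω | R n ω = -(k : ℤ)}] = (k : ENNReal) := by
  classical
  haveI : NeZero n := ⟨Nat.one_le_iff_ne_zero.mp hn⟩
  have mE : ∀ s : Set (Fin n → ℤ), MeasurableSet s := fun s => s.to_countable.measurableSet
  set Φ : Ω → (Fin n → ℤ) := fun ω i => ξ i ω with hΦdef
  have hΦ : Measurable Φ := measurable_pi_lambda _ hmeas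
  set ν := Measure.map Φ μ with hν
  set G : Set (Fin n → ℤ) := {x | (∑ i, x i) = -(k : ℤ) ∧
      ∀ j : ℕ, 1 ≤ j → j < n → (∑ l : Fin n, if (l : ℕ) < j then x l else 0) ≠ -(k : ℤ)} with hG
  set Bs : Set (Fin n → ℤ) := {x | (∑ i, x i) = -(k : ℤ)} with hBs
  -- R n is the full sum
  have hRsum : ∀ ω, R n ω = ∑ i, ξ i ω := fun ω => by
    rw [hR]; exact Finset.sum_congr rfl fun l _ => if_pos l.isLt
  have hAeq : {ω | R n ω = -(k : ℤ) ∧ ∀ j : ℕ, 1 ≤ j → j < n → R j ω ≠ -(k : ℤ)}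
      = Φ ⁻¹' G := by
    ext ω
    simp only [Set.mem_setOf_eq, Set.mem_preimage, hG, hΦdef, hRsum, hR]
  have hBeq : {ω | R n ω = -(k : ℤ)} = Φ ⁻¹' Bs := by
    ext ω
    simp only [Set.mem_setOf_eq, Set.mem_preimage, hBs, hΦdef, hRsum]
  have hmapA : ν G = μ (Φ ⁻¹' G) := Measure.map_apply hΦ (mE G)
  have hmapB : ν Bs = μ (Φ ⁻¹' Bs) := Measure.map_apply hΦ (mE Bs)
  -- shifts
  set σ : Fin n → (Fin n → ℤ) → (Fin n → ℤ) := fun r x i => x (i + r) with hσ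
  have hshift : ∀ r : Fin n, ν (σ r ⁻¹' G) = ν G := by
    intro r
    have hmr : Measurable (fun ω => fun i : Fin n => ξ (i + r) ω) :=
      measurable_pi_lambda _ fun i => hmeas (i + r)
    have h1 : σ r ∘ Φ = (fun ω => fun i : Fin n => ξ (i + r) ω) := rfl
    calc ν (σ r ⁻¹' G) = μ (Φ ⁻¹' (σ r ⁻¹' G)) := Measure.map_apply hΦ (mE _)
      _ = μ ((σ r ∘ Φ) ⁻¹' G) := rfl
      _ = Measure.map (σ r ∘ Φ) μ G := (Measure.map_apply (h1 ▸ hmr) (mE G)).symm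
      _ = Measure.map Φ μ G := by rw [h1, hcyc r]
      _ = ν G := rfl
  -- counting integral
  have hcount : ∑ r : Fin n, ν (σ r ⁻¹' G)
      = ∫⁻ x, (((Finset.univ.filter (fun r : Fin n => σ r x ∈ G)).card : ℝ≥0∞)) ∂ν := by
    have h1 : ∀ r : Fin n, ν (σ r ⁻¹' G) = ∫⁻ x, (σ r ⁻¹' G).indicator (fun _ => (1 : ℝ≥0∞)) x ∂ν := by
      intro r
      rw [lintegral_indicator_const (mE _) (1 : ℝ≥0∞), one_mul]
    rw [Finset.sum_congr rfl fun r _ => h1 r]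
    rw [← lintegral_finset_sum _ (fun r _ => measurable_of_countable _)]
    refine lintegral_congr fun x => ?_
    rw [← Finset.sum_boole]
    refine Finset.sum_congr rfl fun r _ => ?_
    rw [Set.indicator_apply]
    exact if_congr Set.mem_preimage rfl rfl
  -- a.e. bound on coordinates
  have hb_ae : ∀ᵐ x ∂ν, ∀ i : Fin n, -1 ≤ x i := by
    have h0 : ∀ᵐ ω ∂μ, ∀ i : Fin n, -1 ≤ ξ i ω := ae_all_iff.2 hbound
    exact (ae_map_iff hΦ.aemeasurable (mE {x | ∀ i : Fin n, -1 ≤ x i})).2 h0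
  -- pointwise value of the count
  have hfil : ∀ᵐ x ∂ν, (((Finset.univ.filter (fun r : Fin n => σ r x ∈ G)).card : ℝ≥0∞))
      = Bs.indicator (fun _ => (k : ℝ≥0∞)) x := by
    refine hb_ae.mono fun x hx => ?_
    by_cases hxB : x ∈ Bs
    · rw [Set.indicator_of_mem hxB]
      have hxs : (∑ i, x i) = -(k : ℤ) := hxB
      have hsum_shift : ∀ r : Fin n, (∑ i, x (i + r)) = -(k : ℤ) := fun r => by
        have h := Fintype.sum_equiv (Equiv.addRight r) (fun i => x (i + r)) x (fun i => rfl)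
        rw [h]; exact hxs
      have hfc : (Finset.univ.filter (fun r : Fin n => σ r x ∈ G))
          = Finset.univ.filter (fun r : Fin n =>
            ∀ j : ℕ, 1 ≤ j → j < n → (∑ l : Fin n, if (l : ℕ) < j then x (l + r) else 0) ≠ -(k : ℤ)) := by
        refine Finset.filter_congr fun r _ => ?_
        simp only [hG, hσ, Set.mem_setOf_eq]
        constructor
        · exact fun h => h.2
        · exact fun h => ⟨hsum_shift r, h⟩
      rw [hfc]
      rw [key_count n k hn hk1 x hx hxs]
    · rw [Set.indicator_of_notMem hxB]
      have : (Finset.univ.filter (fun r : Fin n => σ r x ∈ G)) = ∅ := by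
        refine Finset.filter_false_of_mem fun r _ => ?_
        simp only [hG, hσ, Set.mem_setOf_eq]
        intro hmem
        apply hxB
        have h2 := hmem.1
        have h := Fintype.sum_equiv (Equiv.addRight r) (fun i => x (i + r)) x (fun i => rfl)
        rw [h] at h2
        exact h2
      rw [this]
      simp
  -- the key identity
  have hkey : (n : ℝ≥0∞) * ν G = (k : ℝ≥0∞) * ν Bs := by
    have h2 : ∑ r : Fin n, ν (σ r ⁻¹' G) = (n : ℝ≥0∞) * ν G := by
      rw [Finset.sum_congr rfl fun r _ => hshift r, Finset.sum_const, Finset.card_univ,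
        Fintype.card_fin, nsmul_eq_mul]
    rw [← h2, hcount, lintegral_congr_ae hfil, lintegral_indicator_const (mE Bs)]
  -- finish
  have hνB0 : ν Bs ≠ 0 := by rwa [hmapB, ← hBeq]
  haveI : IsProbabilityMeasure ν := Measure.isProbabilityMeasure_map hΦ.aemeasurable
  have hνBt : ν Bs ≠ ⊤ := measure_ne_top ν Bs
  rw [cond_apply (hBeq ▸ hΦ (mE Bs) : MeasurableSet {ω | R n ω = -(k:ℤ)}) μ]
  have hBA : {ω | R n ω = -(k : ℤ)} ∩
      {ω | R n ω = -(k : ℤ) ∧ ∀ j : ℕ, 1 ≤ j → j < n → R j ω ≠ -(k : ℤ)}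
      = {ω | R n ω = -(k : ℤ) ∧ ∀ j : ℕ, 1 ≤ j → j < n → R j ω ≠ -(k : ℤ)} :=
    Set.inter_eq_self_of_subset_right fun ω hω => hω.1
  rw [hBA, hAeq, hBeq, ← hmapA, ← hmapB]
  calc (n : ℝ≥0∞) * ((ν Bs)⁻¹ * ν G) = (ν Bs)⁻¹ * ((n : ℝ≥0∞) * ν G) := by ring
    _ = (ν Bs)⁻¹ * ((k : ℝ≥0∞) * ν Bs) := by rw [hkey]
    _ = (k : ℝ≥0∞) * ((ν Bs)⁻¹ * ν Bs) := by ring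
    _ = (k : ℝ≥0∞) := by rw [ENNReal.inv_mul_cancel hνB0 hνBt, mul_one]
end

section
/- (Kemperman's formula / hitting time theorem.) Let R be an upwards skip-free random walk starting at 0, i.e. R(n) = Y(1) + ⋯ + Y(n) with R(0) = 0, where (Y(i)) are i.i.d. integer-valued random variables with P(Y(i) ≤ 1) = 1. For an integer k ≥ 1 let τ(k) = inf{ n ≥ 0 : R(n) ≥ k } be the first time R crosses the level k (since R has increments at most 1, R(τ(k)) = k on {τ(k) < ∞}). Then for every n ≥ 1, n · P(τ(k) = n) = k · P(R(n) = k). -/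
open MeasureTheory ProbabilityTheory
open scoped Classical

section Cycle

/-- Partial sum of the first `m` coordinates of a vector `y : Fin n → ℤ`. -/
def Tsum (n m : ℕ) (y : Fin n → ℤ) : ℤ :=
  ∑ i ∈ Finset.range m, if h : i < n then y ⟨i, h⟩ else 0

/-- The "first passage at time n over level k" event. -/
def kemA (n k : ℕ) : Set (Fin n → ℤ) :=
  {y | (∀ m < n, Tsum n m y < (k : ℤ)) ∧ (k : ℤ) ≤ Tsum n n y}

/-- Cyclic rotation of a vector. -/
def kemRot (n : ℕ) (j : Fin n) (y : Fin n → ℤ) : Fin n → ℤ := fun i => y (i + j)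

variable {n k : ℕ} [NeZero n] {y : Fin n → ℤ}

/-- Periodic extension of `y`. -/
def kemZ (n : ℕ) [NeZero n] (y : Fin n → ℤ) (i : ℕ) : ℤ :=
  y ⟨i % n, Nat.mod_lt _ (Nat.pos_of_ne_zero (NeZero.ne n))⟩

/-- Partial sums of the periodic extension. -/
def kemS (n : ℕ) [NeZero n] (y : Fin n → ℤ) (m : ℕ) : ℤ :=
  ∑ i ∈ Finset.range m, kemZ n y i

lemma kemZ_lt {i : ℕ} (h : i < n) : kemZ n y i = y ⟨i, h⟩ := by
  simp [kemZ, Nat.mod_eq_of_lt h]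

lemma kemZ_coe (i : Fin n) : kemZ n y i.val = y i := by
  rw [kemZ_lt i.isLt]

lemma kemZ_add (i : ℕ) : kemZ n y (i + n) = kemZ n y i := by
  simp [kemZ, Nat.add_mod_right]

lemma kemS_succ (m : ℕ) : kemS n y (m + 1) = kemS n y m + kemZ n y m :=
  Finset.sum_range_succ _ _

lemma kemS_n (hsum : ∑ i, y i = (k : ℤ)) : kemS n y n = k := by
  have : kemS n y n = ∑ i : Fin n, kemZ n y i.val :=
    (Fin.sum_univ_eq_sum_range (kemZ n y) n).symm
  rw [this]
  simp only [kemZ_coe]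
  exact hsum

lemma kemS_add_n (hsum : ∑ i, y i = (k : ℤ)) (m : ℕ) :
    kemS n y (m + n) = kemS n y m + k := by
  induction m with
  | zero => simpa [kemS] using kemS_n hsum
  | succ m ih =>
      have h1 : m + 1 + n = (m + n) + 1 := by omega
      rw [h1, kemS_succ, kemS_succ, ih, kemZ_add]
      ring

lemma kemS_add_mul (hsum : ∑ i, y i = (k : ℤ)) (m l : ℕ) :
    kemS n y (m + l * n) = kemS n y m + l * k := by
  induction l with
  | zero => simp
  | succ l ih =>
      have h1 : m + (l + 1) * n = (m + l * n) + n := by ring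
      rw [h1, kemS_add_n hsum, ih]
      push_cast
      ring

lemma kemS_le_succ (hy : ∀ i, y i ≤ 1) (m : ℕ) : kemS n y (m + 1) ≤ kemS n y m + 1 := by
  have : kemZ n y m ≤ 1 := by rw [kemZ]; exact hy _
  rw [kemS_succ]; omega

/-- "Rotation starting at j has first passage at time n". -/
def kemGood (n : ℕ) [NeZero n] (k : ℕ) (y : Fin n → ℤ) (j : ℕ) : Prop :=
  ∀ m < n, kemS n y (j + m) - kemS n y j < k

/-- Strict record at time j. -/
def kemRec (n : ℕ) [NeZero n] (y : Fin n → ℤ) (j : ℕ) : Prop :=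
  ∀ t < j, kemS n y t < kemS n y j

lemma good_iff_rec (hk : 1 ≤ k) (hsum : ∑ i, y i = (k : ℤ)) {j : ℕ} (hj : n ≤ j) :
    kemGood n k y j ↔ kemRec n y j := by
  have hn : 0 < n := Nat.pos_of_ne_zero (NeZero.ne n)
  constructor
  · intro hG t ht
    obtain ⟨l, r, hr, hdm⟩ : ∃ l r, r < n ∧ l * n + r = j - t - 1 :=
      ⟨(j-t-1)/n, (j-t-1)%n, Nat.mod_lt _ hn, Nat.div_add_mod' _ _⟩
    have hm'lt : t + l * n + n - j < n := by omega
    have hjm : j + (t + l * n + n - j) = t + l * n + n := by omega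
    have hSt : kemS n y (t + l * n) = kemS n y t + l * k := kemS_add_mul hsum t l
    have hS2 : kemS n y (t + l * n + n) = kemS n y (t + l * n) + k := kemS_add_n hsum _
    have hG' := hG _ hm'lt
    rw [hjm, hS2] at hG'
    have hlk : (0 : ℤ) ≤ (l : ℤ) * k := by positivity
    omega
  · intro hR m hm
    rcases Nat.eq_zero_or_pos m with h0 | h0
    · subst h0; simp; exact_mod_cast hk
    · set t := j + m - n with htd
      have ht1 : t + n = j + m := by omega
      have ht2 : t < j := by omega
      have := hR t ht2
      have : kemS n y (j + m) = kemS n y t + k := by rw [← ht1, kemS_add_n hsum]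
      have := hR t ht2
      omega

/-- Running maximum. -/
def kemM (n : ℕ) [NeZero n] (y : Fin n → ℤ) (j : ℕ) : ℤ :=
  (Finset.range (j + 1)).sup' Finset.nonempty_range_add_one (kemS n y)

lemma kemS_le_M {t j : ℕ} (h : t ≤ j) : kemS n y t ≤ kemM n y j :=
  Finset.le_sup' _ (Finset.mem_range.2 (by omega))

lemma kemM_succ (j : ℕ) : kemM n y (j + 1) = max (kemM n y j) (kemS n y (j + 1)) := by
  apply le_antisymm
  · apply Finset.sup'_le
    intro t ht
    have ht' : t ≤ j + 1 := Nat.lt_succ_iff.1 (Finset.mem_range.1 ht)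
    rcases Nat.lt_succ_iff_lt_or_eq.1 (Nat.lt_succ_of_le ht') with h | h
    · exact le_trans (kemS_le_M (Nat.lt_succ_iff.1 h)) (le_max_left _ _)
    · rw [h]; exact le_max_right _ _
  · refine max_le ?_ (kemS_le_M (le_refl (j + 1)))
    apply Finset.sup'_le
    intro t ht
    exact kemS_le_M (by have := Finset.mem_range.1 ht; omega)

lemma rec_iff_M {j : ℕ} : kemRec n y (j + 1) ↔ kemM n y j < kemS n y (j + 1) := by
  rw [kemM, Finset.sup'_lt_iff]
  constructor
  · intro h t ht
    exact h t (Finset.mem_range.1 ht)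
  · intro h t ht
    exact h t (Finset.mem_range.2 ht)

lemma kemM_step (hy : ∀ i, y i ≤ 1) (j : ℕ) :
    kemM n y (j + 1) = kemM n y j + (if kemRec n y (j + 1) then 1 else 0) := by
  by_cases h : kemRec n y (j + 1)
  · have h' := rec_iff_M.1 h
    have h1 : kemS n y (j + 1) ≤ kemM n y j + 1 :=
      le_trans (kemS_le_succ hy j) (by have := kemS_le_M (y := y) (le_refl j); omega)
    have h2 : kemS n y (j + 1) = kemM n y j + 1 := by omega
    rw [kemM_succ, h2, if_pos h]
    omega
  · have h' : ¬ kemM n y j < kemS n y (j + 1) := fun hc => h (rec_iff_M.2 hc)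
    rw [kemM_succ, if_neg h]
    omega

lemma kemM_add (hk : 1 ≤ k) (hsum : ∑ i, y i = (k : ℤ)) :
    kemM n y (n - 1 + n) = kemM n y (n - 1) + k := by
  have hn : 0 < n := Nat.pos_of_ne_zero (NeZero.ne n)
  apply le_antisymm
  · apply Finset.sup'_le
    intro t ht
    have ht' : t ≤ n - 1 + n := by simpa using Nat.lt_succ_iff.1 (Finset.mem_range.1 ht)
    rcases le_or_gt t (n - 1) with h | h
    · have := kemS_le_M (y := y) h
      have hk0 : (0:ℤ) ≤ k := by positivity
      omega
    · have h2 : t - n + n = t := by omega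
      have h3 : t - n ≤ n - 1 := by omega
      have := kemS_le_M (y := y) h3
      have h4 : kemS n y t = kemS n y (t - n) + k := by rw [← h2, kemS_add_n hsum]; rw [h2]
      omega
  · have hsup : kemM n y (n - 1) ≤ kemM n y (n - 1 + n) - k := by
      apply Finset.sup'_le
      intro t ht
      have ht' : t ≤ n - 1 := by simpa using Nat.lt_succ_iff.1 (Finset.mem_range.1 ht)
      have h1 : kemS n y (t + n) = kemS n y t + k := kemS_add_n hsum t
      have h2 : kemS n y (t + n) ≤ kemM n y (n - 1 + n) := kemS_le_M (by omega)
      omega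
    omega

lemma rec_count (hk : 1 ≤ k) (hy : ∀ i, y i ≤ 1) (hsum : ∑ i, y i = (k : ℤ)) :
    (∑ i ∈ Finset.range n, if kemRec n y (n + i) then (1 : ℤ) else 0) = k := by
  have hn : 0 < n := Nat.pos_of_ne_zero (NeZero.ne n)
  have tele : ∑ i ∈ Finset.range n,
      ((fun i => kemM n y (n - 1 + i)) (i + 1) - (fun i => kemM n y (n - 1 + i)) i)
      = kemM n y (n - 1 + n) - kemM n y (n - 1 + 0) :=
    Finset.sum_range_sub (fun i => kemM n y (n - 1 + i)) n
  have hterm : ∀ i, kemM n y (n - 1 + (i + 1)) - kemM n y (n - 1 + i)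
      = if kemRec n y (n + i) then (1 : ℤ) else 0 := by
    intro i
    have h1 : n - 1 + (i + 1) = (n - 1 + i) + 1 := by omega
    have h2 : (n - 1 + i) + 1 = n + i := by omega
    rw [h1, kemM_step hy (n - 1 + i), h2]
    omega
  calc (∑ i ∈ Finset.range n, if kemRec n y (n + i) then (1 : ℤ) else 0)
      = ∑ i ∈ Finset.range n,
        (kemM n y (n - 1 + (i + 1)) - kemM n y (n - 1 + i)) := by
        refine Finset.sum_congr rfl fun i _ => (hterm i).symm
    _ = kemM n y (n - 1 + n) - kemM n y (n - 1 + 0) := tele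
    _ = k := by rw [kemM_add hk hsum]; simp

lemma good_count (hk : 1 ≤ k) (hy : ∀ i, y i ≤ 1) (hsum : ∑ i, y i = (k : ℤ)) :
    ((Finset.range n).filter (fun i => kemGood n k y i)).card = k := by
  have hGR : ∀ i, kemGood n k y i ↔ kemRec n y (n + i) := by
    intro i
    have hshift : kemGood n k y i ↔ kemGood n k y (n + i) := by
      unfold kemGood
      constructor <;> intro h m hm
      · have e1 : n + i + m = (i + m) + n := by omega
        have e2 : n + i = i + n := by omega
        rw [e1, kemS_add_n hsum, e2, kemS_add_n hsum]
        have := h m hm; omega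
      · have e1 : n + i + m = (i + m) + n := by omega
        have e2 : n + i = i + n := by omega
        have := h m hm
        rw [e1, kemS_add_n hsum, e2, kemS_add_n hsum] at this
        omega
    rw [hshift, good_iff_rec hk hsum (by omega)]
  have : ∀ i, (if kemGood n k y i then (1:ℤ) else 0) = (if kemRec n y (n + i) then (1:ℤ) else 0) := by
    intro i; rw [if_congr (hGR i) rfl rfl]
  have hsumeq : (∑ i ∈ Finset.range n, if kemGood n k y i then (1:ℤ) else 0) = k := by
    rw [Finset.sum_congr rfl (fun i _ => this i)]
    exact rec_count hk hy hsum
  rw [Finset.sum_boole] at hsumeq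
  exact_mod_cast hsumeq

lemma Tsum_eq_sum (w : Fin n → ℤ) : Tsum n n w = ∑ i, w i := by
  rw [Tsum, ← Fin.sum_univ_eq_sum_range (fun i => if h : i < n then w ⟨i, h⟩ else 0) n]
  apply Finset.sum_congr rfl
  intro i _
  rw [dif_pos i.isLt]

lemma Tsum_succ (w : Fin n → ℤ) {m : ℕ} (hm : m < n) :
    Tsum n (m + 1) w = Tsum n m w + w ⟨m, hm⟩ := by
  rw [Tsum, Finset.sum_range_succ, dif_pos hm]
  rfl

lemma sum_range_kemZ (a m : ℕ) :
    ∑ i ∈ Finset.range m, kemZ n y (a + i) = kemS n y (a + m) - kemS n y a := by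
  induction m with
  | zero => simp
  | succ m ih =>
      rw [Finset.sum_range_succ, ih]
      have h : a + (m + 1) = (a + m) + 1 := by omega
      rw [h, kemS_succ]
      ring

lemma Tsum_rot (j : Fin n) {m : ℕ} (hm : m ≤ n) :
    Tsum n m (kemRot n j y) = kemS n y (j.val + m) - kemS n y j.val := by
  rw [← sum_range_kemZ, Tsum]
  apply Finset.sum_congr rfl
  intro i hi
  have hi' : i < n := lt_of_lt_of_le (Finset.mem_range.1 hi) hm
  rw [dif_pos hi']
  show kemRot n j y ⟨i, hi'⟩ = kemZ n y (j.val + i)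
  rw [kemRot, kemZ]
  congr 1
  rw [Fin.add_def]
  apply Fin.ext
  simp [Nat.add_comm]

lemma rot_mem_iff (hsum : ∑ i, y i = (k : ℤ)) (j : Fin n) :
    kemRot n j y ∈ kemA n k ↔ kemGood n k y j.val := by
  constructor
  · rintro ⟨h1, _⟩ m hm
    have := h1 m hm
    rwa [Tsum_rot j (le_of_lt hm)] at this
  · intro h
    refine ⟨fun m hm => by rw [Tsum_rot j (le_of_lt hm)]; exact h m hm, ?_⟩
    rw [Tsum_rot j (le_refl n), kemS_add_n hsum j.val]
    omega

lemma sum_rot (j : Fin n) : ∑ i, kemRot n j y i = ∑ i, y i :=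
  Fintype.sum_equiv (Equiv.addRight j) _ _ (fun _ => rfl)

lemma mem_A_sum (hk : 1 ≤ k) (w : Fin n → ℤ) (hw : ∀ i, w i ≤ 1)
    (hA : w ∈ kemA n k) : ∑ i, w i = (k : ℤ) := by
  obtain ⟨h1, h2⟩ := hA
  have hn : 0 < n := Nat.pos_of_ne_zero (NeZero.ne n)
  have hm : n - 1 < n := by omega
  have hlast := h1 (n - 1) hm
  have hsplit : Tsum n n w = Tsum n (n - 1) w + w ⟨n - 1, hm⟩ := by
    have e : Tsum n n w = Tsum n ((n - 1) + 1) w :=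
      congrArg (fun m => Tsum n m w) (by omega)
    rw [e, Tsum_succ w hm]
  have hw' := hw ⟨n - 1, hm⟩
  rw [← Tsum_eq_sum]
  omega

theorem cycle_count_s5 (hk : 1 ≤ k) (hy : ∀ i, y i ≤ 1) (hsum : ∑ i, y i = (k : ℤ)) :
    (Finset.univ.filter fun j : Fin n => kemRot n j y ∈ kemA n k).card = k := by
  have h1 : (Finset.univ.filter fun j : Fin n => kemRot n j y ∈ kemA n k)
      = Finset.univ.filter (fun j : Fin n => kemGood n k y j.val) :=
    Finset.ext fun j => by simp [rot_mem_iff hsum j]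
  rw [h1, Finset.card_filter]
  rw [Fin.sum_univ_eq_sum_range (fun i => if kemGood n k y i then 1 else 0) n]
  have := good_count hk hy hsum
  rw [Finset.card_filter] at this
  exact this

end Cycle

/-- Kemperman's formula / hitting time theorem: for an upwards skip-free random
walk `R` with i.i.d. integer-valued increments `≤ 1` a.s., starting at `0`, the
first passage time `τ(k)` over a level `k ≥ 1` satisfies
`n · P(τ(k) = n) = k · P(R n = k)` for every `n ≥ 1`. -/
theorem kemperman_hitting_time
    {Ω : Type*} [MeasurableSpace Ω] (μ : Measure Ω) [IsProbabilityMeasure μ]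
    (Y : ℕ → Ω → ℤ)
    (hmeas : ∀ i, Measurable (Y i))
    (hindep : iIndepFun Y μ)
    (hident : ∀ i, IdentDistrib (Y i) (Y 0) μ μ)
    (hbound : ∀ i, ∀ᵐ ω ∂μ, Y i ω ≤ 1)
    (R : ℕ → Ω → ℤ)
    (hR : ∀ n ω, R n ω = ∑ j ∈ Finset.range n, Y j ω)
    (k : ℕ) (hk : 1 ≤ k) (n : ℕ) (hn : 1 ≤ n) :
    (n : ENNReal) * μ {ω | (∀ m : ℕ, m < n → R m ω < (k : ℤ)) ∧ (k : ℤ) ≤ R n ω}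
      = (k : ENNReal) * μ {ω | R n ω = (k : ℤ)} := by
  haveI hn0 : NeZero n := ⟨by omega⟩
  classical
  set m0 : Measure ℤ := μ.map (Y 0) with hm0
  haveI : IsProbabilityMeasure m0 := Measure.isProbabilityMeasure_map (hmeas 0).aemeasurable
  set ν : Measure (Fin n → ℤ) := Measure.pi (fun _ : Fin n => m0) with hνdef
  have mAll : ∀ s : Set (Fin n → ℤ), MeasurableSet s := fun s => s.to_countable.measurableSet
  have mZ : ∀ s : Set ℤ, MeasurableSet s := fun s => s.to_countable.measurableSet
  have hvecmeas : ∀ f : Fin n → ℕ, Measurable (fun ω (i : Fin n) => Y (f i) ω) :=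
    fun f => measurable_pi_lambda _ fun i => hmeas (f i)
  -- joint law of any injectively-reindexed vector of the Y's is the product measure
  have hmap : ∀ f : Fin n → ℕ, Function.Injective f →
      μ.map (fun ω (i : Fin n) => Y (f i) ω) = ν := by
    intro f hf
    refine (Measure.pi_eq fun s hs => ?_).symm
    set sets : ℕ → Set ℤ :=
      fun j' => ⋂ i ∈ Finset.univ.filter (fun i : Fin n => f i = j'), s i with hsets
    have hsets_f : ∀ i : Fin n, sets (f i) = s i := by
      intro i
      have h1 : Finset.univ.filter (fun i' : Fin n => f i' = f i) = {i} := by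
        ext i'; simp [hf.eq_iff]
      simp only [hsets, h1]
      simp
    have hpre : (fun ω (i : Fin n) => Y (f i) ω) ⁻¹' (Set.univ.pi s)
        = ⋂ j' ∈ Finset.image f Finset.univ, Y j' ⁻¹' sets j' := by
      ext ω
      simp only [Set.mem_preimage, Set.mem_pi, Set.mem_univ, forall_true_left,
        Set.mem_iInter, Finset.mem_image, Finset.mem_univ, true_and]
      constructor
      · rintro h j' ⟨i0, rfl⟩
        simp only [hsets, Set.mem_iInter, Finset.mem_filter, Finset.mem_univ, true_and]
        intro i hi
        rw [← hi]
        exact h i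
      · intro h i
        have := h (f i) ⟨i, rfl⟩
        simp only [hsets, Set.mem_iInter, Finset.mem_filter, Finset.mem_univ, true_and] at this
        exact this i rfl
    calc μ.map (fun ω (i : Fin n) => Y (f i) ω) (Set.univ.pi s)
        = μ ((fun ω (i : Fin n) => Y (f i) ω) ⁻¹' (Set.univ.pi s)) :=
          Measure.map_apply (hvecmeas f) (MeasurableSet.univ_pi hs)
      _ = μ (⋂ j' ∈ Finset.image f Finset.univ, Y j' ⁻¹' sets j') := by rw [hpre]
      _ = ∏ j' ∈ Finset.image f Finset.univ, μ (Y j' ⁻¹' sets j') :=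
          hindep.measure_inter_preimage_eq_mul _ (fun j' _ => mZ _)
      _ = ∏ i : Fin n, μ (Y (f i) ⁻¹' sets (f i)) :=
          Finset.prod_image (fun i _ i' _ h => hf h)
      _ = ∏ i : Fin n, m0 (s i) := by
          refine Finset.prod_congr rfl fun i _ => ?_
          rw [hsets_f i, hm0, ← (hident (f i)).map_eq,
            Measure.map_apply (hmeas (f i)) (mZ _)]
  have hinj : ∀ j : ℕ, Function.Injective (fun i : Fin n => (i.val + j) % n) := by
    intro j i1 i2 h
    apply Fin.ext
    have h1 : (i1.val + j) % n = (i2.val + j) % n := h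
    have h2 : i1.val % n = i2.val % n := Nat.ModEq.add_right_cancel' j h1
    rwa [Nat.mod_eq_of_lt i1.isLt, Nat.mod_eq_of_lt i2.isLt] at h2
  have hνj : ∀ j : ℕ,
      μ.map (fun ω (i : Fin n) => Y ((i.val + j) % n) ω) = ν :=
    fun j => hmap (fun i : Fin n => (i.val + j) % n) (hinj j)
  -- partial sums of the vector are the walk
  have hT : ∀ (ω : Ω) (m : ℕ), m ≤ n →
      Tsum n m (fun i : Fin n => Y ((i.val + 0) % n) ω) = R m ω := by
    intro ω m hm
    rw [hR, Tsum]
    apply Finset.sum_congr rfl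
    intro i hi
    have hi' : i < n := lt_of_lt_of_le (Finset.mem_range.1 hi) hm
    rw [dif_pos hi']
    simp [Nat.mod_eq_of_lt hi']
  have hE : {ω | (∀ m : ℕ, m < n → R m ω < (k : ℤ)) ∧ (k : ℤ) ≤ R n ω}
      = (fun ω (i : Fin n) => Y ((i.val + 0) % n) ω) ⁻¹' kemA n k := by
    ext ω
    simp only [Set.mem_setOf_eq, Set.mem_preimage, kemA]
    constructor
    · rintro ⟨h1, h2⟩
      exact ⟨fun m hm => by rw [hT ω m (le_of_lt hm)]; exact h1 m hm,
        by rw [hT ω n le_rfl]; exact h2⟩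
    · rintro ⟨h1, h2⟩
      exact ⟨fun m hm => by rw [← hT ω m (le_of_lt hm)]; exact h1 m hm,
        by rw [← hT ω n le_rfl]; exact h2⟩
  have hB : {ω | R n ω = (k : ℤ)}
      = (fun ω (i : Fin n) => Y ((i.val + 0) % n) ω) ⁻¹' {y : Fin n → ℤ | Tsum n n y = (k : ℤ)} := by
    ext ω
    simp only [Set.mem_setOf_eq, Set.mem_preimage, hT ω n le_rfl]
  -- rotations at the ω level
  have hrot : ∀ j : Fin n, ∀ ω,
      kemRot n j (fun i : Fin n => Y ((i.val + 0) % n) ω)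
        = fun i : Fin n => Y ((i.val + j.val) % n) ω := by
    intro j ω
    funext i
    simp only [kemRot, Fin.add_def]
    congr 1
    rw [Nat.add_zero]
    exact Nat.mod_mod_of_dvd _ dvd_rfl
  have hνrot : ∀ j : Fin n, ν (kemRot n j ⁻¹' kemA n k) = ν (kemA n k) := by
    intro j
    have h1 : (fun ω (i : Fin n) => Y ((i.val + 0) % n) ω) ⁻¹' (kemRot n j ⁻¹' kemA n k)
        = (fun ω (i : Fin n) => Y ((i.val + j.val) % n) ω) ⁻¹' kemA n k := by
      ext ω
      simp only [Set.mem_preimage, hrot j ω]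
    calc ν (kemRot n j ⁻¹' kemA n k)
        = μ.map (fun ω (i : Fin n) => Y ((i.val + 0) % n) ω) (kemRot n j ⁻¹' kemA n k) := by
          rw [hνj 0]
      _ = μ ((fun ω (i : Fin n) => Y ((i.val + 0) % n) ω) ⁻¹' (kemRot n j ⁻¹' kemA n k)) :=
          Measure.map_apply (hvecmeas _) (mAll _)
      _ = μ ((fun ω (i : Fin n) => Y ((i.val + j.val) % n) ω) ⁻¹' kemA n k) := by rw [h1]
      _ = μ.map (fun ω (i : Fin n) => Y ((i.val + j.val) % n) ω) (kemA n k) :=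
          (Measure.map_apply (hvecmeas _) (mAll _)).symm
      _ = ν (kemA n k) := by rw [hνj j.val]
  -- a.e. the coordinates are ≤ 1
  have hae : ∀ᵐ y ∂ν, y ∈ {y : Fin n → ℤ | ∀ i, y i ≤ 1} := by
    rw [← hνj 0, ae_map_iff (hvecmeas _).aemeasurable (mAll _)]
    have h := ae_all_iff.2 (fun i : Fin n => hbound ((i.val + 0) % n))
    filter_upwards [h] with ω hω
    exact hω
  -- the pointwise cycle-lemma identity
  have hpoint : ∀ y : Fin n → ℤ, (∀ i, y i ≤ 1) →
      ∑ j : Fin n, (kemRot n j ⁻¹' kemA n k).indicator (1 : (Fin n → ℤ) → ENNReal) y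
        = (k : ENNReal) * ({y : Fin n → ℤ | Tsum n n y = (k : ℤ)}).indicator 1 y := by
    intro y hy
    by_cases hsum : ∑ i, y i = (k : ℤ)
    · have hBm : y ∈ {y : Fin n → ℤ | Tsum n n y = (k : ℤ)} := by
        rw [Set.mem_setOf_eq, Tsum_eq_sum]; exact hsum
      rw [Set.indicator_of_mem hBm]
      simp only [Pi.one_apply, mul_one]
      calc ∑ j : Fin n, (kemRot n j ⁻¹' kemA n k).indicator (1 : (Fin n → ℤ) → ENNReal) y
          = ∑ j : Fin n, if kemRot n j y ∈ kemA n k then (1 : ENNReal) else 0 := by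
            refine Finset.sum_congr rfl fun j _ => ?_
            simp [Set.indicator_apply, Set.mem_preimage]
        _ = ((Finset.univ.filter fun j : Fin n => kemRot n j y ∈ kemA n k).card : ENNReal) :=
            Finset.sum_boole _ _
        _ = (k : ENNReal) := by rw [cycle_count_s5 hk hy hsum]
    · have hBm : y ∉ {y : Fin n → ℤ | Tsum n n y = (k : ℤ)} := by
        rw [Set.mem_setOf_eq, Tsum_eq_sum]; exact hsum
      rw [Set.indicator_of_notMem hBm, mul_zero]
      apply Finset.sum_eq_zero
      intro j _
      apply Set.indicator_of_notMem
      intro hmem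
      apply hsum
      have hy' : ∀ i, kemRot n j y i ≤ 1 := fun i => hy _
      have h2 := mem_A_sum hk _ hy' hmem
      rwa [sum_rot j] at h2
  -- put everything together
  calc (n : ENNReal) * μ {ω | (∀ m : ℕ, m < n → R m ω < (k : ℤ)) ∧ (k : ℤ) ≤ R n ω}
      = (n : ENNReal) * ν (kemA n k) := by
        rw [hE, ← Measure.map_apply (hvecmeas _) (mAll _), hνj 0]
    _ = ∑ _j : Fin n, ν (kemA n k) := by
        rw [Finset.sum_const, Finset.card_univ, Fintype.card_fin, nsmul_eq_mul]
    _ = ∑ j : Fin n, ν (kemRot n j ⁻¹' kemA n k) :=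
        (Finset.sum_congr rfl fun j _ => (hνrot j).symm)
    _ = ∑ j : Fin n, ∫⁻ y, (kemRot n j ⁻¹' kemA n k).indicator 1 y ∂ν :=
        (Finset.sum_congr rfl fun j _ => (lintegral_indicator_one (mAll _)).symm)
    _ = ∫⁻ y, ∑ j : Fin n, (kemRot n j ⁻¹' kemA n k).indicator 1 y ∂ν :=
        (lintegral_finset_sum _ (fun j _ => measurable_of_countable _)).symm
    _ = ∫⁻ y, (k : ENNReal) * ({y : Fin n → ℤ | Tsum n n y = (k : ℤ)}).indicator 1 y ∂ν := by
        apply lintegral_congr_ae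
        filter_upwards [hae] with y hy
        exact hpoint y hy
    _ = (k : ENNReal) * ∫⁻ y, ({y : Fin n → ℤ | Tsum n n y = (k : ℤ)}).indicator 1 y ∂ν :=
        lintegral_const_mul _ (measurable_of_countable _)
    _ = (k : ENNReal) * ν {y : Fin n → ℤ | Tsum n n y = (k : ℤ)} := by
        rw [lintegral_indicator_one (mAll _)]
    _ = (k : ENNReal) * μ {ω | R n ω = (k : ℤ)} := by
        rw [hB, ← Measure.map_apply (hvecmeas _) (mAll _), hνj 0]
end
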